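/- Let A be a ring and M a left A-module admitting a short exact sequence 0 → A^s → A^r → M → 0 of left A-modules. Then M is stably free (i.e., M ⊕ A^p ≅ A^q for some p, q) if and only if Ext^1_A(M, A) = 0. -/

import Mathlib

open CategoryTheory

namespace StablyFreeAux

noncomputable section

open CategoryTheory Limits

variable {A : Type} [Ring A] {M : Type} [AddCommGroup M] [Module A M]
  {s r : ℕ}

lemma subsingleton_of_isZero {R : Type*} [Ring R] {X : ModuleCat R} (h : IsZero X) :
    Subsingleton X := by
  have h0 : (𝟙 X) = (0 : X ⟶ X) := h.eq_of_src _ _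
  constructor
  intro a b
  calc a = (𝟙 X) a := rfl
    _ = (0 : X ⟶ X) a := by rw [h0]
    _ = (𝟙 X) b := by rw [h0]; rfl
    _ = b := rfl

lemma moduleCat_isIso_of_bijective {R : Type} [Ring R] {X Y : ModuleCat R} (φ : X ⟶ Y)
    (h : Function.Bijective φ) : IsIso φ := by
  let e := LinearEquiv.ofBijective φ.hom h
  exact ⟨ModuleCat.ofHom e.symm.toLinearMap,
    ModuleCat.hom_ext (LinearMap.ext fun x => e.symm_apply_apply x),
    ModuleCat.hom_ext (LinearMap.ext fun y => e.apply_symm_apply y)⟩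

/-- A concrete criterion for `descOpcycles` to be an isomorphism in `ModuleCat`. -/
lemma isIso_descOpcycles {R : Type} [Ring R] (S : ShortComplex (ModuleCat R))
    {N : ModuleCat R} (k : S.X₂ ⟶ N) (hk : S.f ≫ k = 0)
    (hsurj : Function.Surjective k)
    (hker : ∀ x, k x = 0 → ∃ y, S.f y = x) :
    IsIso (S.descOpcycles k hk) := by
  have hp : Function.Surjective S.pOpcycles :=
    (ModuleCat.epi_iff_surjective _).mp inferInstance
  have hpk : ∀ x, S.descOpcycles k hk (S.pOpcycles x) = k x := fun x =>
    LinearMap.congr_fun (congrArg ModuleCat.Hom.hom (S.p_descOpcycles k hk)) x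
  have hfp : ∀ y, S.pOpcycles (S.f y) = 0 := fun y =>
    LinearMap.congr_fun (congrArg ModuleCat.Hom.hom S.f_pOpcycles) y
  apply moduleCat_isIso_of_bijective
  constructor
  · intro a b hab
    obtain ⟨x, rfl⟩ := hp a
    obtain ⟨y, rfl⟩ := hp b
    rw [hpk, hpk] at hab
    obtain ⟨z, hz⟩ := hker (x - y) (by rw [map_sub, hab, sub_self])
    have h0 : S.pOpcycles x - S.pOpcycles y = 0 := by
      rw [← map_sub, ← hz, hfp]
    exact sub_eq_zero.mp h0
  · intro n
    obtain ⟨x, hx⟩ := hsurj n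
    exact ⟨S.pOpcycles x, by rw [hpk, hx]⟩

/-- Degreewise objects of the free resolution. -/
def resX (A : Type) [Ring A] (s r : ℕ) : ℕ → ModuleCat A
  | 0 => ModuleCat.of A (Fin r → A)
  | 1 => ModuleCat.of A (Fin s → A)
  | _ => ModuleCat.of A PUnit

/-- Differentials of the free resolution. -/
def resD (f : (Fin s → A) →ₗ[A] (Fin r → A)) :
    ∀ n : ℕ, resX A s r (n + 1) ⟶ resX A s r n
  | 0 => ModuleCat.ofHom f
  | (_ + 1) => 0

/-- The two-term free complex `… → 0 → A^s → A^r`. -/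
def resComplex (f : (Fin s → A) →ₗ[A] (Fin r → A)) : ChainComplex (ModuleCat A) ℕ :=
  ChainComplex.of (resX A s r) (resD f) (fun n => by
    show resD f (n + 1) ≫ resD f n = 0
    rw [show resD f (n + 1) = 0 from rfl, zero_comp])

lemma resComplex_d (f : (Fin s → A) →ₗ[A] (Fin r → A)) :
    (resComplex f).d 1 0 = ModuleCat.ofHom f :=
  ChainComplex.of_d (resX A s r) (resD f) 0

/-- The augmentation map to `M`. -/
def resπ (f : (Fin s → A) →ₗ[A] (Fin r → A)) (g : (Fin r → A) →ₗ[A] M)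
    (hgf : ∀ x, g (f x) = 0) :
    resComplex f ⟶ (ChainComplex.single₀ (ModuleCat A)).obj (ModuleCat.of A M) :=
  (ChainComplex.toSingle₀Equiv _ _).symm ⟨ModuleCat.ofHom g, by
    rw [resComplex_d]
    exact ModuleCat.hom_ext (LinearMap.ext fun x => hgf x)⟩

lemma resπ_f_zero (f : (Fin s → A) →ₗ[A] (Fin r → A)) (g : (Fin r → A) →ₗ[A] M)
    (hgf : ∀ x, g (f x) = 0) : (resπ f g hgf).f 0 = ModuleCat.ofHom g :=
  ChainComplex.toSingle₀Equiv_symm_apply_f_zero _ _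

lemma resπ_quasiIso (f : (Fin s → A) →ₗ[A] (Fin r → A)) (g : (Fin r → A) →ₗ[A] M)
    (hgf : ∀ x, g (f x) = 0)
    (hf : Function.Injective f) (hg : Function.Surjective g)
    (hfg : LinearMap.ker g = LinearMap.range f) :
    QuasiIso (resπ f g hgf) := by
  constructor
  intro i
  match i with
  | 0 =>
      rw [ChainComplex.quasiIsoAt₀_iff,
        ShortComplex.quasiIso_iff_isIso_descOpcycles _
          ((resComplex f).shape 0 0 (by simp))
          (HomologicalComplex.single_obj_d (ComplexShape.down ℕ) 0 (ModuleCat.of A M) 1 0)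
          (HomologicalComplex.single_obj_d (ComplexShape.down ℕ) 0 (ModuleCat.of A M) 0 0)]
      apply isIso_descOpcycles
      · show Function.Surjective ((resπ f g hgf).f 0)
        rw [resπ_f_zero]
        exact hg
      · intro x hx
        have hx' : g x = 0 := by
          have h2 : ((resπ f g hgf).f 0) x = 0 := hx
          rw [resπ_f_zero] at h2
          exact h2
        have hmem : x ∈ LinearMap.range f := by rw [← hfg]; exact hx'
        obtain ⟨y, hy⟩ := hmem
        refine ⟨y, ?_⟩
        show ((resComplex f).d 1 0) y = x
        rw [resComplex_d]
        exact hy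
  | (n + 1) =>
      rw [quasiIsoAt_iff_exactAt' _ _ (ChainComplex.exactAt_succ_single_obj _ _)]
      rw [HomologicalComplex.exactAt_iff' _ (n + 2) (n + 1) n (by simp) (by simp)]
      match n with
      | 0 =>
          rw [ShortComplex.moduleCat_exact_iff]
          intro x hx
          have hx' : f x = 0 := by
            have h2 : ((resComplex f).d 1 0) x = 0 := hx
            rw [resComplex_d] at h2
            exact h2
          have hx0 : x = 0 := hf (by rw [hx']; exact (map_zero f).symm)
          exact ⟨0, by rw [hx0]; exact map_zero _⟩
      | (m + 1) =>
          exact ShortComplex.exact_of_isZero_X₂ _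
            (ModuleCat.isZero_of_subsingleton (ModuleCat.of A PUnit))

end

end StablyFreeAux

namespace StablyFreeAux

noncomputable section

open CategoryTheory Limits

variable {A : Type} [Ring A] {M : Type} [AddCommGroup M] [Module A M] {s r : ℕ}

lemma gf_zero (f : (Fin s → A) →ₗ[A] (Fin r → A)) (g : (Fin r → A) →ₗ[A] M)
    (hfg : LinearMap.ker g = LinearMap.range f) : ∀ x, g (f x) = 0 := fun x => by
  have : f x ∈ LinearMap.ker g := by rw [hfg]; exact ⟨x, rfl⟩
  exact this

/-- The explicit projective resolution of `M`. -/
def resolution (f : (Fin s → A) →ₗ[A] (Fin r → A)) (g : (Fin r → A) →ₗ[A] M)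
    (hf : Function.Injective f) (hg : Function.Surjective g)
    (hfg : LinearMap.ker g = LinearMap.range f) :
    ProjectiveResolution (ModuleCat.of A M) where
  complex := resComplex f
  projective n := by
    match n with
    | 0 => exact ModuleCat.projective_of_free (Pi.basisFun A (Fin r))
    | 1 => exact ModuleCat.projective_of_free (Pi.basisFun A (Fin s))
    | (n + 2) =>
        exact (ModuleCat.isZero_of_subsingleton (ModuleCat.of A PUnit)).projective
  π := resπ f g (gf_zero f g hfg)
  quasiIso := resπ_quasiIso f g (gf_zero f g hfg) hf hg hfg

lemma subsingleton_ext_iff (f : (Fin s → A) →ₗ[A] (Fin r → A)) (g : (Fin r → A) →ₗ[A] M)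
    (hf : Function.Injective f) (hg : Function.Surjective g)
    (hfg : LinearMap.ker g = LinearMap.range f) :
    Subsingleton (((Ext ℤ (ModuleCat A) 1).obj
        (Opposite.op (ModuleCat.of A M))).obj (ModuleCat.of A A)) ↔
      ∀ φ : (Fin s → A) →ₗ[A] A, ∃ ψ : (Fin r → A) →ₗ[A] A, ψ ∘ₗ f = φ := by
  classical
  let P := resolution f g hf hg hfg
  let e := P.isoExt (R := ℤ) 1 (ModuleCat.of A A)
  set Y₁ := P.complex.linearYonedaObj ℤ (ModuleCat.of A A) with hY₁
  have h1 : Subsingleton (((Ext ℤ (ModuleCat A) 1).obj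
      (Opposite.op (ModuleCat.of A M))).obj (ModuleCat.of A A)) ↔ IsZero (Y₁.homology 1) := by
    constructor
    · intro hs
      exact IsZero.of_iso (ModuleCat.isZero_of_subsingleton _) e.symm
    · intro hz
      exact subsingleton_of_isZero (IsZero.of_iso hz e)
  rw [h1, ← HomologicalComplex.exactAt_iff_isZero_homology,
    HomologicalComplex.exactAt_iff' _ 0 1 2 (by simp) (by simp),
    ShortComplex.moduleCat_exact_iff]
  have hsub : Subsingleton ((Y₁.sc' 0 1 2).X₃) := by
    constructor
    intro u v
    show (u : (resComplex f).X 2 ⟶ ModuleCat.of A A) = v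
    apply ModuleCat.hom_ext
    apply LinearMap.ext
    intro x
    have hx : x = 0 := Subsingleton.elim (α := PUnit.{1}) x 0
    rw [hx, map_zero, map_zero]
  have key : ∀ ψ : ((resComplex f).X 0 ⟶ ModuleCat.of A A),
      (Y₁.sc' 0 1 2).f ψ =
        (ModuleCat.ofHom ((ψ.hom : (Fin r → A) →ₗ[A] A).comp f) :
          ModuleCat.of A (Fin s → A) ⟶ ModuleCat.of A A) := fun ψ => by
    show (resComplex f).d 1 0 ≫ ψ = _
    rw [resComplex_d]
    rfl
  constructor
  · intro h φ
    obtain ⟨ψ, hψ⟩ := h (ModuleCat.ofHom φ) (Subsingleton.elim _ _)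
    exact ⟨ψ.hom, congrArg ModuleCat.Hom.hom ((key ψ).symm.trans hψ)⟩
  · intro h φ _
    obtain ⟨ψ, hψ⟩ := h φ.hom
    exact ⟨(ModuleCat.ofHom ψ : (resComplex f).X 0 ⟶ ModuleCat.of A A),
      (key _).trans (ModuleCat.hom_ext hψ)⟩

end

end StablyFreeAux

/-- Let `A` be a ring and `M` a left `A`-module admitting a short exact
sequence `0 → A^s → A^r → M → 0` of left `A`-modules.  Then `M` is stably free
(i.e. `M ⊕ A^p ≅ A^q` for some `p, q`) if and only if `Ext¹_A(M, A) = 0`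
(the Ext group being computed in the abelian category of left `A`-modules). -/
theorem stablyFree_iff_ext_one_eq_zero {A : Type} [Ring A]
    (M : Type) [AddCommGroup M] [Module A M]
    {s r : ℕ} (f : (Fin s → A) →ₗ[A] (Fin r → A)) (g : (Fin r → A) →ₗ[A] M)
    (hf : Function.Injective f) (hg : Function.Surjective g)
    (hfg : LinearMap.ker g = LinearMap.range f) :
    (∃ p q : ℕ, Nonempty ((M × (Fin p → A)) ≃ₗ[A] (Fin q → A))) ↔
      Subsingleton (((Ext ℤ (ModuleCat A) 1).obj
        (Opposite.op (ModuleCat.of A M))).obj (ModuleCat.of A A)) := by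
  classical
  constructor
  · rintro ⟨p, q, ⟨e⟩⟩
    have hproj : Module.Projective A M := by
      refine Module.Projective.of_split
        (e.toLinearMap.comp (LinearMap.inl A M (Fin p → A)))
        ((LinearMap.fst A M (Fin p → A)).comp e.symm.toLinearMap) ?_
      apply LinearMap.ext
      intro m
      simp
    haveI : CategoryTheory.Projective (ModuleCat.of A M) :=
      (IsProjective.iff_projective M).mp hproj
    exact StablyFreeAux.subsingleton_of_isZero
      (isZero_Ext_succ_of_projective (R := ℤ) (ModuleCat.of A M) (ModuleCat.of A A) 0)
  · intro hsub
    have hsurj := (StablyFreeAux.subsingleton_ext_iff f g hf hg hfg).mp hsub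
    choose ψ hψ using fun i : Fin s => hsurj (LinearMap.proj i)
    set h : (Fin r → A) →ₗ[A] (Fin s → A) := LinearMap.pi ψ with hh
    have hhf : ∀ x, h (f x) = x := by
      intro x
      funext i
      have := LinearMap.congr_fun (hψ i) x
      simpa [hh] using this
    have hgf : ∀ x, g (f x) = 0 := StablyFreeAux.gf_zero f g hfg
    set φm : (Fin r → A) →ₗ[A] M × (Fin s → A) := LinearMap.prod g h with hφm
    have hbij : Function.Bijective φm := by
      constructor
      · intro x y hxy
        have h1 : g x = g y := congrArg Prod.fst hxy
        have h2 : h x = h y := congrArg Prod.snd hxy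
        have hmem : x - y ∈ LinearMap.range f := by
          rw [← hfg]
          show g (x - y) = 0
          rw [map_sub, h1, sub_self]
        obtain ⟨z, hz⟩ := hmem
        have : h (x - y) = 0 := by rw [map_sub, h2, sub_self]
        rw [← hz, hhf] at this
        have : x - y = 0 := by rw [← hz, this, map_zero]
        exact sub_eq_zero.mp this
      · rintro ⟨m, y⟩
        obtain ⟨x₀, hx₀⟩ := hg m
        refine ⟨x₀ - f (h x₀) + f y, ?_⟩
        have hgp : g (x₀ - f (h x₀) + f y) = m := by
          rw [map_add, map_sub, hgf, hgf, sub_zero, add_zero, hx₀]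
        have hhp : h (x₀ - f (h x₀) + f y) = y := by
          rw [map_add, map_sub, hhf, hhf, sub_self, zero_add]
        show (g _, h _) = (m, y)
        rw [hgp, hhp]
    exact ⟨s, r, ⟨(LinearEquiv.ofBijective φm hbij).symm⟩⟩
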